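/- Let X be a nonnegative random variable whose CDF has the piecewise form: Pr(X ≤ x) = 0 for x < τ_B, Pr(X ≤ x) = F_i(x) for τ_i ≤ x < τ_{i-1} (for i = 2,...,B), and Pr(X ≤ x) = F_1(x) for x ≥ τ_1, where 0 < τ_B ≤ ... ≤ τ_1 and each F_i is the CDF of a nonnegative random variable, depending smoothly on the parameters. Then for each i, the partial derivative of E[X²] with respect to τ_i equals 2τ_i times the partial derivative of E[X] with respect to τ_i. -/

import Mathlib

open MeasureTheory intervalIntegral

lemma aux_deriv (a b : ℝ) (g h : ℝ → ℝ) (hg : Continuous g) (hh : Continuous h)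
    (c : ℝ) (m : ℝ → ℝ)
    (hm : ∀ t ∈ Set.Icc a b, m t = c + ∫ x in a..b, (if x < t then g x else h x))
    (t : ℝ) (ht : t ∈ Set.Ioo a b) : HasDerivAt m (g t - h t) t := by
  obtain ⟨hat, htb⟩ := ht
  set φ : ℝ → ℝ := fun s => c + ((∫ x in a..s, g x) + ∫ x in s..b, h x) with hφ
  have key : ∀ s ∈ Set.Ioo a b, m s = φ s := by
    intro s hs
    obtain ⟨has, hsb⟩ := hs
    have hne : ∀ᵐ x : ℝ, x ≠ s := by
      rw [ae_iff]
      simp [Real.volume_singleton]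
    have h1 : IntervalIntegrable (fun x => if x < s then g x else h x) volume a s := by
      refine (hg.intervalIntegrable a s).congr_ae ?_
      filter_upwards [ae_restrict_of_ae hne, ae_restrict_mem measurableSet_uIoc] with x hx hx2
      rw [Set.uIoc_of_le has.le] at hx2
      rw [if_pos (lt_of_le_of_ne hx2.2 hx)]
    have h2 : IntervalIntegrable (fun x => if x < s then g x else h x) volume s b := by
      refine (hh.intervalIntegrable s b).congr_ae ?_
      filter_upwards [ae_restrict_mem measurableSet_uIoc] with x hx2
      rw [Set.uIoc_of_le hsb.le] at hx2
      rw [if_neg (not_lt.2 hx2.1.le)]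
    have e1 : (∫ x in a..s, (if x < s then g x else h x)) = ∫ x in a..s, g x := by
      apply intervalIntegral.integral_congr_ae
      filter_upwards [hne] with x hx hx2
      rw [Set.uIoc_of_le has.le] at hx2
      exact if_pos (lt_of_le_of_ne hx2.2 hx)
    have e2 : (∫ x in s..b, (if x < s then g x else h x)) = ∫ x in s..b, h x := by
      apply intervalIntegral.integral_congr
      intro x hx2
      rw [Set.uIcc_of_le hsb.le] at hx2
      exact if_neg (not_lt.2 hx2.1)
    rw [hm s ⟨has.le, hsb.le⟩, ← intervalIntegral.integral_add_adjacent_intervals h1 h2, e1, e2]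
  have hD1 : HasDerivAt (fun u => ∫ x in a..u, g x) (g t) t :=
    intervalIntegral.integral_hasDerivAt_right (hg.intervalIntegrable a t)
      (hg.stronglyMeasurable.stronglyMeasurableAtFilter) hg.continuousAt
  have hD2 : HasDerivAt (fun u => ∫ x in u..b, h x) (-h t) t :=
    intervalIntegral.integral_hasDerivAt_left (hh.intervalIntegrable t b)
      (hh.stronglyMeasurable.stronglyMeasurableAtFilter) hh.continuousAt
  have hφD : HasDerivAt φ (g t - h t) t := by
    have := ((hD1.add hD2).const_add c)
    rw [sub_eq_add_neg]; exact this
  refine hφD.congr_of_eventuallyEq ?_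
  exact Filter.eventuallyEq_of_mem (isOpen_Ioo.mem_nhds ⟨hat, htb⟩) key

/-- Lemma `diffmoments`, abstracted: near the threshold `τ_i = t`,
the survival function of `X` has the form `x ↦ if x < t then g x else h x` on an
interval `[a, b]` containing `t` (with `g = 1 - F_{i+1}`, `h = 1 - F_i` fixed CDF
complements not depending on the threshold), and the contributions outside `[a,b]`
do not depend on `t`.  Then `∂/∂τ_i E[X²] = 2 τ_i ∂/∂τ_i E[X]`. -/
theorem stmt_0 (a b : ℝ) (g h : ℝ → ℝ) (hg : Continuous g) (hh : Continuous h)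
    (c₁ c₂ : ℝ) (m₁ m₂ : ℝ → ℝ)
    (hm₁ : ∀ t ∈ Set.Icc a b,
      m₁ t = c₁ + ∫ x in a..b, (if x < t then g x else h x))
    (hm₂ : ∀ t ∈ Set.Icc a b,
      m₂ t = c₂ + ∫ x in a..b, 2 * x * (if x < t then g x else h x))
    (t : ℝ) (ht : t ∈ Set.Ioo a b) (d : ℝ) (hd : HasDerivAt m₁ d t) :
    HasDerivAt m₂ (2 * t * d) t := by
  have h1 := aux_deriv a b g h hg hh c₁ m₁ hm₁ t ht
  have hd' : d = g t - h t := hd.unique h1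
  have h2 := aux_deriv a b (fun x => 2 * x * g x) (fun x => 2 * x * h x)
    (by continuity) (by continuity) c₂ m₂ ?_ t ht
  · subst hd'
    convert h2 using 1
    ring
  · intro s hs
    rw [hm₂ s hs]
    congr 1
    apply intervalIntegral.integral_congr
    intro x _
    by_cases hx : x < s <;> simp [hx]
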